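/- Let g:(a,b)→ℝ be a C² function with |g''(x)| ≤ C/(x-a)² + C/(b-x)² for all x∈(a,b), let y₀=(a+b)/2 and suppose g'(x₀)=0 for some x₀∈(a,b). Set K = (1/4)·exp((b-a)/(x₀-a) + (b-a)/(b-x₀)). Then for every t ≥ 0, the Lebesgue measure of {x∈(a,b) : |g(x)-g(y₀)| ≥ t} divided by (b-a) is at most 2√K · e^{-t/(2C)}. -/

import Mathlib

open MeasureTheory Set

/-- If `f' ≤ u'` on `Ioo a b`, then `f d - f c ≤ u d - u c` for `c ≤ d` in `Ioo a b`. -/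
lemma mono_aux {a b : ℝ} {f u f' u' : ℝ → ℝ}
    (hf : ∀ x ∈ Set.Ioo a b, HasDerivAt f (f' x) x)
    (hu : ∀ x ∈ Set.Ioo a b, HasDerivAt u (u' x) x)
    (hle : ∀ x ∈ Set.Ioo a b, f' x ≤ u' x)
    {c d : ℝ} (hc : c ∈ Set.Ioo a b) (hd : d ∈ Set.Ioo a b) (hcd : c ≤ d) :
    f d - f c ≤ u d - u c := by
  have hsub : Set.Icc c d ⊆ Set.Ioo a b := fun x hx =>
    ⟨lt_of_lt_of_le hc.1 hx.1, lt_of_le_of_lt hx.2 hd.2⟩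
  have hmono : MonotoneOn (fun x => u x - f x) (Set.Icc c d) := by
    apply monotoneOn_of_deriv_nonneg (convex_Icc c d)
    · exact fun x hx => (((hu x (hsub hx)).sub (hf x (hsub hx))).continuousAt).continuousWithinAt
    · intro x hx
      rw [interior_Icc] at hx
      have hx' : x ∈ Set.Ioo a b := hsub (Set.Ioo_subset_Icc_self hx)
      exact ((hu x hx').sub (hf x hx')).differentiableAt.differentiableWithinAt
    · intro x hx
      rw [interior_Icc] at hx
      have hx' : x ∈ Set.Ioo a b := hsub (Set.Ioo_subset_Icc_self hx)
      rw [show deriv (fun x => u x - f x) x = u' x - f' x from ((hu x hx').sub (hf x hx')).deriv]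
      linarith [hle x hx']
  have := hmono ⟨le_refl c, hcd⟩ ⟨hcd, le_refl d⟩ hcd
  simp only at this
  linarith

/-- If `|f'| ≤ u'` on `Ioo a b`, then `|f d - f c| ≤ u d - u c` for `c ≤ d` in `Ioo a b`. -/
lemma abs_aux {a b : ℝ} {f u f' u' : ℝ → ℝ}
    (hf : ∀ x ∈ Set.Ioo a b, HasDerivAt f (f' x) x)
    (hu : ∀ x ∈ Set.Ioo a b, HasDerivAt u (u' x) x)
    (hle : ∀ x ∈ Set.Ioo a b, |f' x| ≤ u' x)
    {c d : ℝ} (hc : c ∈ Set.Ioo a b) (hd : d ∈ Set.Ioo a b) (hcd : c ≤ d) :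
    |f d - f c| ≤ u d - u c := by
  have h1 : f d - f c ≤ u d - u c :=
    mono_aux hf hu (fun x hx => (abs_le.mp (hle x hx)).2) hc hd hcd
  have h2 : (-f) d - (-f) c ≤ u d - u c := by
    apply mono_aux (f' := fun x => -f' x) (fun x hx => (hf x hx).neg) hu _ hc hd hcd
    intro x hx
    show -f' x ≤ u' x
    have := (abs_le.mp (hle x hx)).1
    linarith
  simp only [Pi.neg_apply] at h2
  rw [abs_le]
  constructor <;> linarith

set_option maxHeartbeats 1000000 in
theorem stmt1 (a b C : ℝ) (hab : a < b) (hC : 0 < C)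
    (g g' g'' : ℝ → ℝ)
    (hg : ∀ x ∈ Set.Ioo a b, HasDerivAt g (g' x) x)
    (hg' : ∀ x ∈ Set.Ioo a b, HasDerivAt g' (g'' x) x)
    (hg''cont : ContinuousOn g'' (Set.Ioo a b))
    (hbound : ∀ x ∈ Set.Ioo a b, |g'' x| ≤ C / (x - a) ^ 2 + C / (b - x) ^ 2)
    (x₀ : ℝ) (hx₀ : x₀ ∈ Set.Ioo a b) (hx₀' : g' x₀ = 0)
    (K : ℝ) (hK : K = (1 / 4) * Real.exp ((b - a) / (x₀ - a) + (b - a) / (b - x₀))) :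
    ∀ t : ℝ, 0 ≤ t →
      (volume {x ∈ Set.Ioo a b | t ≤ |g x - g ((a + b) / 2)|}).toReal / (b - a) ≤
        2 * Real.sqrt K * Real.exp (-t / (2 * C)) := by
  intro t ht
  have hba : (0:ℝ) < b - a := by linarith
  have hxa : (0:ℝ) < x₀ - a := by linarith [hx₀.1]
  have hbx : (0:ℝ) < b - x₀ := by linarith [hx₀.2]
  set y₀ : ℝ := (a + b) / 2 with hy₀def
  have hy₀ : y₀ ∈ Set.Ioo a b := ⟨by rw [hy₀def]; linarith, by rw [hy₀def]; linarith⟩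
  set D : ℝ := C / (x₀ - a) + C / (b - x₀) with hDdef
  have hD0 : 0 ≤ D := by positivity
  set M : ℝ := (b - a) / (x₀ - a) + (b - a) / (b - x₀) with hMdef
  have hDM : D * (b - a) = C * M := by rw [hDdef, hMdef]; field_simp
  set s : ℝ := t / C - M with hsdef
  set E : ℝ := Real.exp s with hEdef
  have hE0 : 0 < E := Real.exp_pos s
  have hE1 : (0:ℝ) < 1 + E := by linarith
  -- antiderivative of the bound on g''
  set F : ℝ → ℝ := fun x => C / (b - x) - C / (x - a) with hFdef
  have hF : ∀ x ∈ Set.Ioo a b, HasDerivAt F (C / (x - a) ^ 2 + C / (b - x) ^ 2) x := by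
    intro x hx
    have h1 : (0:ℝ) < x - a := by linarith [hx.1]
    have h2 : (0:ℝ) < b - x := by linarith [hx.2]
    have d1 : HasDerivAt (fun y => b - y) (-1 : ℝ) x := by
      simpa using (hasDerivAt_id x).const_sub b
    have d2 : HasDerivAt (fun y => y - a) (1 : ℝ) x := by
      simpa using (hasDerivAt_id x).sub_const a
    have i1 : HasDerivAt (fun y => (b - y)⁻¹) (-(-1) / (b - x) ^ 2) x := d1.inv h2.ne'
    have i2 : HasDerivAt (fun y => (y - a)⁻¹) (-1 / (x - a) ^ 2) x := d2.inv h1.ne'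
    have : HasDerivAt (fun y => C * (b - y)⁻¹ - C * (y - a)⁻¹)
        (C * (-(-1) / (b - x) ^ 2) - C * (-1 / (x - a) ^ 2)) x :=
      (i1.const_mul C).sub (i2.const_mul C)
    have hfun : F = fun y => C * (b - y)⁻¹ - C * (y - a)⁻¹ := by
      funext y; rw [hFdef]; simp [div_eq_mul_inv]
    rw [hfun]
    convert this using 1
    field_simp
    ring
  -- bound on g'
  have hg'bound : ∀ x ∈ Set.Ioo a b, |g' x| ≤ C / (x - a) + C / (b - x) + D := by
    intro x hx
    have h1 : (0:ℝ) < x - a := by linarith [hx.1]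
    have h2 : (0:ℝ) < b - x := by linarith [hx.2]
    have p1 : 0 < C / (x - a) := by positivity
    have p2 : 0 < C / (b - x) := by positivity
    have p3 : 0 < C / (x₀ - a) := by positivity
    have p4 : 0 < C / (b - x₀) := by positivity
    rcases le_total x₀ x with h | h
    · have := abs_aux hg' hF hbound hx₀ hx h
      rw [hx₀'] at this
      simp only [sub_zero] at this
      rw [hFdef] at this
      simp only at this
      rw [hDdef]
      linarith
    · have := abs_aux hg' hF hbound hx hx₀ h
      rw [hx₀'] at this
      rw [abs_sub_comm] at this
      simp only [sub_zero] at this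
      rw [hFdef] at this
      simp only at this
      rw [hDdef]
      linarith
  -- antiderivative of the bound on g'
  set Ψ : ℝ → ℝ := fun x => C * Real.log (x - a) - C * Real.log (b - x) + D * x with hΨdef
  have hΨ : ∀ x ∈ Set.Ioo a b, HasDerivAt Ψ (C / (x - a) + C / (b - x) + D) x := by
    intro x hx
    have h1 : (0:ℝ) < x - a := by linarith [hx.1]
    have h2 : (0:ℝ) < b - x := by linarith [hx.2]
    have d1 : HasDerivAt (fun y => y - a) (1 : ℝ) x := by
      simpa using (hasDerivAt_id x).sub_const a
    have d2 : HasDerivAt (fun y => b - y) (-1 : ℝ) x := by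
      simpa using (hasDerivAt_id x).const_sub b
    have l1 : HasDerivAt (fun y => Real.log (y - a)) (1 / (x - a)) x := d1.log h1.ne'
    have l2 : HasDerivAt (fun y => Real.log (b - y)) (-1 / (b - x)) x := d2.log h2.ne'
    have l3 : HasDerivAt (fun y => D * y) D x := by
      simpa using (hasDerivAt_id x).const_mul D
    have : HasDerivAt Ψ (C * (1 / (x - a)) - C * (-1 / (b - x)) + D) x :=
      ((l1.const_mul C).sub (l2.const_mul C)).add l3
    convert this using 1
    field_simp
    ring
  -- the endpoints
  set q : ℝ := (a + b * E) / (1 + E) with hqdef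
  set p : ℝ := (a * E + b) / (1 + E) with hpdef
  have hpa : p - a = (b - a) / (1 + E) := by rw [hpdef]; field_simp; ring
  have hbq : b - q = (b - a) / (1 + E) := by rw [hqdef]; field_simp; ring
  -- set inclusion
  have hincl : {x ∈ Set.Ioo a b | t ≤ |g x - g y₀|} ⊆ Set.Ioc a p ∪ Set.Ico q b := by
    rintro x ⟨hx, hxt⟩
    have h1 : (0:ℝ) < x - a := by linarith [hx.1]
    have h2 : (0:ℝ) < b - x := by linarith [hx.2]
    have hya : y₀ - a = (b - a) / 2 := by rw [hy₀def]; ring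
    have hby : b - y₀ = (b - a) / 2 := by rw [hy₀def]; ring
    rcases le_total y₀ x with h | h
    · -- right half: x ≥ q
      right
      have key : |g x - g y₀| ≤ Ψ x - Ψ y₀ := abs_aux hg hΨ hg'bound hy₀ hx h
      have hΨval : Ψ x - Ψ y₀ = C * (Real.log (x - a) - Real.log (b - x)) + D * (x - y₀) := by
        rw [hΨdef]; simp only; rw [hya, hby]; ring
      have hxy : x - y₀ ≤ b - a := by linarith [hx.2, hy₀.1]
      have hDxy : D * (x - y₀) ≤ C * M := by
        calc D * (x - y₀) ≤ D * (b - a) := mul_le_mul_of_nonneg_left hxy hD0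
        _ = C * M := hDM
      have hlog : s ≤ Real.log (x - a) - Real.log (b - x) := by
        have ht' : t ≤ C * (Real.log (x - a) - Real.log (b - x)) + C * M := by
          calc t ≤ |g x - g y₀| := hxt
          _ ≤ Ψ x - Ψ y₀ := key
          _ = C * (Real.log (x - a) - Real.log (b - x)) + D * (x - y₀) := hΨval
          _ ≤ C * (Real.log (x - a) - Real.log (b - x)) + C * M := by linarith
        have : t / C ≤ Real.log (x - a) - Real.log (b - x) + M :=
          (div_le_iff₀ hC).mpr (by linarith)
        rw [hsdef]; linarith
      have hexp : E ≤ (x - a) / (b - x) := by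
        calc E = Real.exp s := rfl
        _ ≤ Real.exp (Real.log (x - a) - Real.log (b - x)) := Real.exp_le_exp.mpr hlog
        _ = (x - a) / (b - x) := by
            rw [Real.exp_sub, Real.exp_log h1, Real.exp_log h2]
      have hx' : E * (b - x) ≤ x - a := (le_div_iff₀ h2).mp hexp
      refine ⟨?_, hx.2⟩
      rw [hqdef, div_le_iff₀ hE1]
      nlinarith [hx']
    · -- left half: x ≤ p
      left
      have key : |g y₀ - g x| ≤ Ψ y₀ - Ψ x := abs_aux hg hΨ hg'bound hx hy₀ h
      rw [abs_sub_comm] at key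
      have hΨval : Ψ y₀ - Ψ x = C * (Real.log (b - x) - Real.log (x - a)) + D * (y₀ - x) := by
        rw [hΨdef]; simp only; rw [hya, hby]; ring
      have hxy : y₀ - x ≤ b - a := by linarith [hy₀.2, hx.1]
      have hlog : s ≤ Real.log (b - x) - Real.log (x - a) := by
        have ht' : t ≤ C * (Real.log (b - x) - Real.log (x - a)) + C * M := by
          calc t ≤ |g x - g y₀| := hxt
          _ ≤ Ψ y₀ - Ψ x := key
          _ = C * (Real.log (b - x) - Real.log (x - a)) + D * (y₀ - x) := hΨval
          _ ≤ C * (Real.log (b - x) - Real.log (x - a)) + C * M := by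
              have : D * (y₀ - x) ≤ D * (b - a) := mul_le_mul_of_nonneg_left hxy hD0
              linarith [hDM]
        have : t / C ≤ Real.log (b - x) - Real.log (x - a) + M :=
          (div_le_iff₀ hC).mpr (by linarith)
        rw [hsdef]; linarith
      have hexp : E ≤ (b - x) / (x - a) := by
        calc E = Real.exp s := rfl
        _ ≤ Real.exp (Real.log (b - x) - Real.log (x - a)) := Real.exp_le_exp.mpr hlog
        _ = (b - x) / (x - a) := by
            rw [Real.exp_sub, Real.exp_log h2, Real.exp_log h1]
      have hx' : E * (x - a) ≤ b - x := (le_div_iff₀ h1).mp hexp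
      refine ⟨hx.1, ?_⟩
      rw [hpdef, le_div_iff₀ hE1]
      nlinarith [hx']
  -- measure bound
  have hmeas : (volume {x ∈ Set.Ioo a b | t ≤ |g x - g y₀|}).toReal ≤ 2 * (b - a) / (1 + E) := by
    have h1 : volume {x ∈ Set.Ioo a b | t ≤ |g x - g y₀|} ≤
        ENNReal.ofReal (2 * (b - a) / (1 + E)) := by
      calc volume {x ∈ Set.Ioo a b | t ≤ |g x - g y₀|}
          ≤ volume (Set.Ioc a p ∪ Set.Ico q b) := measure_mono hincl
        _ ≤ volume (Set.Ioc a p) + volume (Set.Ico q b) := measure_union_le _ _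
        _ = ENNReal.ofReal (p - a) + ENNReal.ofReal (b - q) := by
            rw [Real.volume_Ioc, Real.volume_Ico]
        _ = ENNReal.ofReal ((p - a) + (b - q)) := by
            rw [ENNReal.ofReal_add (by rw [hpa]; positivity) (by rw [hbq]; positivity)]
        _ = ENNReal.ofReal (2 * (b - a) / (1 + E)) := by
            rw [hpa, hbq]; ring_nf
    exact ENNReal.toReal_le_of_le_ofReal (by positivity) h1
  -- compute the RHS
  have hsqrtK : Real.sqrt K = Real.exp (M / 2) / 2 := by
    rw [hK, hMdef]
    rw [show (1/4 : ℝ) = (1/2)^2 by norm_num]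
    rw [Real.sqrt_mul (by positivity), Real.sqrt_sq (by norm_num), ← Real.exp_half]
    ring
  have hRHS : 2 * Real.sqrt K * Real.exp (-t / (2 * C)) = Real.exp (-s / 2) := by
    rw [hsqrtK, hsdef]
    rw [show (2 : ℝ) * (Real.exp (M / 2) / 2) = Real.exp (M / 2) by ring]
    rw [← Real.exp_add]
    congr 1
    field_simp
    ring
  rw [hRHS]
  -- final inequality
  have hkey : 2 / (1 + E) ≤ Real.exp (-s / 2) := by
    have hu : Real.exp (-s / 2) = (Real.exp (s / 2))⁻¹ := by
      rw [← Real.exp_neg]; congr 1; ring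
    have hE : E = Real.exp (s / 2) * Real.exp (s / 2) := by
      rw [hEdef, ← Real.exp_add]; congr 1; ring
    have hu0 : 0 < Real.exp (s / 2) := Real.exp_pos _
    rw [hu, div_le_iff₀ hE1, inv_mul_eq_div, le_div_iff₀ hu0]
    nlinarith [sq_nonneg (Real.exp (s / 2) - 1)]
  calc (volume {x ∈ Set.Ioo a b | t ≤ |g x - g y₀|}).toReal / (b - a)
      ≤ (2 * (b - a) / (1 + E)) / (b - a) := by gcongr
    _ = 2 / (1 + E) := by field_simp
    _ ≤ Real.exp (-s / 2) := hkey
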